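/- Let R be a commutative ring, n and k₁,…,k_{r-1} positive integers, c_i = n·k_i + 1, and M ⊆ ℤ₊ʳ the monoid generated by all monomials of total degree n in t₁,…,t_r. Then the R[t_r]-algebra automorphism η of R[t₁,…,t_r] defined by η(t_i) = t_i + t_r^{c_i} for i = 1,…,r−1 maps the monoid algebra R[M] into itself. -/

import Mathlib

open MvPolynomial

private lemma aux_pow_whom {σ : Type*} {R : Type*} [CommRing R] {Mdeg : Type*}
    [AddCommMonoid Mdeg] {w : σ → Mdeg} {φ : MvPolynomial σ R} {m : Mdeg}
    (h : φ.IsWeightedHomogeneous w m) (k : ℕ) :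
    (φ ^ k).IsWeightedHomogeneous w (k • m) := by
  induction k with
  | zero => simpa using isWeightedHomogeneous_one R w
  | succ k ih =>
    rw [pow_succ, succ_nsmul]
    exact ih.mul h

private lemma aux_exists_le {r : ℕ} (v : Fin (r + 1) →₀ ℕ) (t : ℕ)
    (ht : t ≤ ∑ i, v i) : ∃ a : Fin (r + 1) →₀ ℕ, (∀ i, a i ≤ v i) ∧ ∑ i, a i = t := by
  induction t with
  | zero => exact ⟨0, fun i => Nat.zero_le _, by simp⟩
  | succ t ih =>
    obtain ⟨a, hav, hat⟩ := ih (le_of_lt (Nat.lt_of_succ_le ht))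
    have hlt : ∑ i, a i < ∑ i, v i := hat ▸ Nat.lt_of_succ_le ht
    obtain ⟨i, hi⟩ : ∃ i, a i < v i := by
      by_contra h
      push_neg at h
      exact absurd (Finset.sum_le_sum fun i _ => h i) (not_le.2 hlt)
    refine ⟨a + Finsupp.single i 1, fun j => ?_, ?_⟩
    · rcases eq_or_ne j i with rfl | hne
      · simp only [Finsupp.add_apply, Finsupp.single_eq_same]
        omega
      · simp only [Finsupp.add_apply, Finsupp.single_eq_of_ne hne, add_zero]
        exact hav j
    · have : ∑ j, ((a + Finsupp.single i 1 : Fin (r + 1) →₀ ℕ)) j = ∑ j, a j + ∑ j, (Finsupp.single i 1 : Fin (r + 1) →₀ ℕ) j := by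
        simp only [Finsupp.add_apply]
        rw [Finset.sum_add_distrib]
      rw [this, hat]
      have : ∑ j, Finsupp.single i 1 j = 1 := by
        rw [Finset.sum_eq_single i]
        · simp
        · intro b _ hb; exact Finsupp.single_eq_of_ne hb
        · simp
      omega

private lemma aux_mem_closure {r n : ℕ} (hn : 0 < n) :
    ∀ (m : ℕ) (v : Fin (r + 1) →₀ ℕ), ∑ i, v i = n * m →
      v ∈ AddSubmonoid.closure {v : Fin (r + 1) →₀ ℕ | ∑ i, v i = n} := by
  intro m
  induction m with
  | zero =>
    intro v hv
    have : v = 0 := by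
      ext i
      have h0 : ∑ i, v i = 0 := by simpa using hv
      have := Finset.sum_eq_zero_iff.mp h0 i (Finset.mem_univ i)
      simpa using this
    rw [this]
    exact AddSubmonoid.zero_mem _
  | succ m ih =>
    intro v hv
    obtain ⟨a, hav, hat⟩ := aux_exists_le v n (by nlinarith)
    have hvab : v = a + (v - a) := by
      ext i
      have := hav i
      simp only [Finsupp.add_apply, Finsupp.tsub_apply]
      omega
    have hsum : ∑ i, (v - a) i = n * m := by
      have h1 : ∑ i, (a i + (v - a) i) = ∑ i, v i := by
        apply Finset.sum_congr rfl
        intro i _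
        have := hav i
        simp only [Finsupp.tsub_apply]
        omega
      rw [Finset.sum_add_distrib, hat] at h1
      have h2 : n * (m + 1) = n * m + n := by ring
      rw [hv, h2] at h1
      omega
    rw [hvab]
    exact AddSubmonoid.add_mem _ (AddSubmonoid.subset_closure hat) (ih _ hsum)

/-- Let `M ⊆ ℤ₊^{r+1}` be the monoid generated by all exponent vectors of total
degree `n` (the Veronese monoid), and let `c i = n * k i + 1` with `k i > 0`.
Then the `R`-algebra endomorphism `η` of `R[t₀,…,t_r]` fixing the last variable
and sending `t_i ↦ t_i + t_r ^ (c i)` for the other variables maps the monoid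
algebra `R[M]` (the `R`-span of the monomials with exponents in `M`) into itself. -/
theorem stmt6 (R : Type*) [CommRing R] (n r : ℕ) (hn : 0 < n)
    (c k : Fin (r + 1) → ℕ) (hk : ∀ i, 0 < k i) (hc : ∀ i, c i = n * k i + 1)
    (M : AddSubmonoid ((Fin (r + 1)) →₀ ℕ))
    (hM : M = AddSubmonoid.closure {v : (Fin (r + 1)) →₀ ℕ | ∑ i, v i = n})
    (RM : Submodule R (MvPolynomial (Fin (r + 1)) R))
    (hRM : RM = Submodule.span R
      {p : MvPolynomial (Fin (r + 1)) R | ∃ v ∈ M, p = monomial v (1 : R)})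
    (η : MvPolynomial (Fin (r + 1)) R →ₐ[R] MvPolynomial (Fin (r + 1)) R)
    (hη : η = aeval (fun i => if i = Fin.last r then X i
      else X i + (X (Fin.last r) : MvPolynomial (Fin (r + 1)) R) ^ (c i))) :
    ∀ p ∈ RM, η p ∈ RM := by
  haveI : NeZero n := ⟨hn.ne'⟩
  subst hM hRM hη
  -- membership in M is equivalent to having total degree divisible by n
  have hMdvd : ∀ v : Fin (r + 1) →₀ ℕ,
      (v ∈ AddSubmonoid.closure {v : (Fin (r + 1)) →₀ ℕ | ∑ i, v i = n} ↔ n ∣ ∑ i, v i) := by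
    intro v
    constructor
    · intro hv
      induction hv using AddSubmonoid.closure_induction with
      | mem x hx => exact hx ▸ dvd_refl n
      | zero => simp
      | add x y _ _ hx hy =>
        have : ∑ i, (x + y) i = ∑ i, x i + ∑ i, y i := by
          simp [Finset.sum_add_distrib]
        rw [this]; exact Nat.dvd_add hx hy
    · rintro ⟨m, hm⟩
      exact aux_mem_closure hn m v hm
  -- any monomial with exponent of total degree divisible by n lies in the span
  have hmono : ∀ (w : Fin (r + 1) →₀ ℕ), n ∣ ∑ i, w i → ∀ a : R,
      (monomial w a : MvPolynomial (Fin (r + 1)) R) ∈ Submodule.span R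
        {p : MvPolynomial (Fin (r + 1)) R | ∃ v ∈ AddSubmonoid.closure
          {v : (Fin (r + 1)) →₀ ℕ | ∑ i, v i = n}, p = monomial v (1 : R)} := by
    intro w hw a
    have h1 : (monomial w (1 : R)) ∈ Submodule.span R
        {p : MvPolynomial (Fin (r + 1)) R | ∃ v ∈ AddSubmonoid.closure
          {v : (Fin (r + 1)) →₀ ℕ | ∑ i, v i = n}, p = monomial v (1 : R)} :=
      Submodule.subset_span ⟨w, (hMdvd w).mpr hw, rfl⟩
    have : monomial w a = a • monomial w (1 : R) := by
      rw [smul_monomial, smul_eq_mul, mul_one]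
    rw [this]
    exact Submodule.smul_mem _ a h1
  -- any polynomial all of whose exponents have total degree divisible by n lies in the span
  have hpoly : ∀ p : MvPolynomial (Fin (r + 1)) R,
      (∀ w ∈ p.support, n ∣ ∑ i, w i) → p ∈ Submodule.span R
        {p : MvPolynomial (Fin (r + 1)) R | ∃ v ∈ AddSubmonoid.closure
          {v : (Fin (r + 1)) →₀ ℕ | ∑ i, v i = n}, p = monomial v (1 : R)} := by
    intro p hp
    rw [p.as_sum]
    exact Submodule.sum_mem _ fun w hw => hmono w (hp w hw) _
  -- the images of the variables are weighted homogeneous of degree 1 mod n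
  set f : Fin (r + 1) → MvPolynomial (Fin (r + 1)) R := fun i =>
    if i = Fin.last r then X i
    else X i + (X (Fin.last r) : MvPolynomial (Fin (r + 1)) R) ^ (c i) with hf
  set w : Fin (r + 1) → ZMod n := fun _ => 1 with hwdef
  have hfhom : ∀ i, (f i).IsWeightedHomogeneous w 1 := by
    intro i
    rw [hf]
    by_cases hi : i = Fin.last r
    · simp only [hi, if_pos rfl]
      exact isWeightedHomogeneous_X R w _
    · simp only [if_neg hi]
      apply (isWeightedHomogeneous_X R w i).add
      have := aux_pow_whom (isWeightedHomogeneous_X R w (Fin.last r)) (c i)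
      convert this using 1
      rw [hwdef]
      simp only [nsmul_eq_mul, mul_one]
      rw [hc i]
      push_cast
      simp [ZMod.natCast_self]
    -- degree computations done
  -- main argument
  intro p hp
  refine Submodule.span_induction ?_ ?_ ?_ ?_ hp
  · rintro q ⟨v, hvM, rfl⟩
    have hvd : n ∣ ∑ i, v i := (hMdvd v).mp hvM
    -- η (monomial v 1) is weighted homogeneous of degree (∑ v : ZMod n) = 0
    have hhom : (aeval f (monomial v (1 : R))).IsWeightedHomogeneous w 0 := by
      rw [aeval_monomial]
      have hprod : (Finsupp.prod v fun i k => f i ^ k).IsWeightedHomogeneous w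
          (∑ i ∈ v.support, (v i) • (1 : ZMod n)) := by
        apply IsWeightedHomogeneous.prod
        intro i _
        exact aux_pow_whom (hfhom i) (v i)
      have hdeg : (∑ i ∈ v.support, (v i) • (1 : ZMod n)) = 0 := by
        have h1 : (∑ i ∈ v.support, (v i) • (1 : ZMod n)) =
            ∑ i, (v i) • (1 : ZMod n) := by
          apply Finset.sum_subset (Finset.subset_univ _)
          intro x _ hx
          rw [Finsupp.notMem_support_iff.mp hx]
          simp
        rw [h1]
        have : ∑ i, (v i) • (1 : ZMod n) = ((∑ i, v i : ℕ) : ZMod n) := by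
          push_cast
          simp [nsmul_eq_mul]
        rw [this]
        exact (ZMod.natCast_eq_zero_iff _ _).mpr hvd
      rw [← hdeg]
      have h1 : algebraMap R (MvPolynomial (Fin (r + 1)) R) 1 = 1 := map_one _
      rw [h1, one_mul]
      exact hprod
    apply hpoly
    intro d hd
    have := hhom (Finsupp.mem_support_iff.mp hd)
    rw [Finsupp.weight_apply] at this
    have h2 : (Finsupp.sum d fun i c => c • w i) = ((∑ i, d i : ℕ) : ZMod n) := by
      rw [Finsupp.sum]
      have h1 : (∑ i ∈ d.support, (d i) • w i) = ∑ i, (d i) • w i := by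
        apply Finset.sum_subset (Finset.subset_univ _)
        intro x _ hx
        rw [Finsupp.notMem_support_iff.mp hx]
        simp
      rw [h1, hwdef]
      push_cast
      simp [nsmul_eq_mul]
    rw [h2] at this
    exact (ZMod.natCast_eq_zero_iff _ _).mp this
  · simp
  · intro x y _ _ hx hy
    rw [map_add]
    exact Submodule.add_mem _ hx hy
  · intro a x _ hx
    rw [map_smul]
    exact Submodule.smul_mem _ a hx
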